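/- Let f : ℕ → ℕ → ℕ satisfy (KK) f d n ≤ f (d−1) (n−1) + 2·f d (n/2) + 2 whenever d ≥ 3 and n ≥ 2d, (LOW) f d n ≤ f (d−1) (n−1) whenever 3 ≤ d ≤ n < 2d, (REMOVE) f (d−1) (n−1) + 1 ≤ f (d−1) n whenever n ≥ d ≥ 3, and (BASE3) f 3 n ≤ n − 3 for all n ≥ 3. Then for all d ≥ 3 and all n ≥ 2^(d−1), (f d n : ℝ) ≤ (1/16) · n³ / √(3·log₂ n − 5). -/

import Mathlib

private lemma cb_sq (m : ℕ) : (Nat.centralBinom m)^2 * (3*m+1) ≤ 16^m := by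
  induction m with
  | zero => simp [Nat.centralBinom]
  | succ m ih =>
    have id1 : (m+1) * Nat.centralBinom (m+1) = 2 * (2*m+1) * Nat.centralBinom m :=
      Nat.succ_mul_centralBinom_succ m
    have key : (2*m+1)^2 * (3*m+4) ≤ 4 * ((m+1)^2 * (3*m+1)) := by nlinarith
    have pos : 0 < (m+1)^2 * (3*m+1) := by positivity
    have main : ((m+1)^2 * (3*m+1)) * ((Nat.centralBinom (m+1))^2 * (3*m+4))
        ≤ ((m+1)^2 * (3*m+1)) * 16^(m+1) := by
      calc ((m+1)^2 * (3*m+1)) * ((Nat.centralBinom (m+1))^2 * (3*m+4))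
          = ((3*m+1)*(3*m+4)) * ((m+1) * Nat.centralBinom (m+1))^2 := by ring
        _ = ((3*m+1)*(3*m+4)) * (2*(2*m+1) * Nat.centralBinom m)^2 := by rw [id1]
        _ = ((3*m+4) * (4*(2*m+1)^2)) * ((Nat.centralBinom m)^2 * (3*m+1)) := by ring
        _ ≤ ((3*m+4) * (4*(2*m+1)^2)) * 16^m := Nat.mul_le_mul_left _ ih
        _ = ((2*m+1)^2 * (3*m+4)) * (4 * 16^m) := by ring
        _ ≤ (4 * ((m+1)^2 * (3*m+1))) * (4 * 16^m) := Nat.mul_le_mul_right _ key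
        _ = ((m+1)^2 * (3*m+1)) * 16^(m+1) := by ring
    exact Nat.le_of_mul_le_mul_left main pos

private lemma choose_step (a s : ℕ) (h : a ≤ s) : (a+s+1).choose a ≤ 2 * (a+s).choose a := by
  cases a with
  | zero => simp
  | succ b =>
    have h1 : (b+1+s+1).choose (b+1) = (b+1+s).choose b + (b+1+s).choose (b+1) :=
      Nat.choose_succ_succ (b+1+s) b
    have h2 : (b+1+s).choose b ≤ (b+1+s).choose (b+1) :=
      Nat.choose_le_succ_of_lt_half_left (by omega)
    omega

private lemma choose_sq (a s : ℕ) (h : a ≤ s) :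
    ((a+s).choose a)^2 * (3*a+1) ≤ 4^(a+s) := by
  induction s, h using Nat.le_induction with
  | base =>
    have e1 : a + a = 2*a := by ring
    rw [e1, show (2*a).choose a = Nat.centralBinom a from rfl,
      show (4:ℕ)^(2*a) = 16^a by rw [pow_mul]; norm_num]
    exact cb_sq a
  | succ s hs ih =>
    have hstep := choose_step a s hs
    calc ((a+(s+1)).choose a)^2 * (3*a+1)
        = ((a+s+1).choose a)^2 * (3*a+1) := by rw [show a+(s+1) = a+s+1 from rfl]
      _ ≤ (2 * (a+s).choose a)^2 * (3*a+1) :=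
          Nat.mul_le_mul_right _ (Nat.pow_le_pow_left hstep 2)
      _ = 4 * (((a+s).choose a)^2 * (3*a+1)) := by ring
      _ ≤ 4 * 4^(a+s) := Nat.mul_le_mul_left _ ih
      _ = 4^(a+(s+1)) := by ring


private lemma key_bound' (f : ℕ → ℕ → ℕ)
    (kk : ∀ d n, 3 ≤ d → 2 * d ≤ n →
      f d n ≤ f (d - 1) (n - 1) + 2 * f d (n / 2) + 2)
    (low : ∀ d n, 3 ≤ d → d ≤ n → n < 2 * d → f d n ≤ f (d - 1) (n - 1))
    (base3 : ∀ n, 3 ≤ n → f 3 n ≤ n - 3) :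
    ∀ n d, 3 ≤ d → d ≤ n →
      f d n ≤ (d - 3 + (Nat.log 2 n - 2)).choose (d - 3) * (n - d) := by
  intro n
  induction n using Nat.strong_induction_on with
  | _ n ih =>
    intro d hd hdn
    by_cases hd3 : d = 3
    · subst hd3
      simpa using base3 n hdn
    · have hd4 : 4 ≤ d := by omega
      obtain ⟨e, rfl⟩ : ∃ e, d = e + 4 := ⟨d - 4, by omega⟩
      have hsub3 : e + 4 - 3 = e + 1 := by omega
      have hsub1 : e + 4 - 1 = e + 3 := by omega
      by_cases hkk : 2 * (e+4) ≤ n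
      · -- KK case
        have hn8 : 8 ≤ n := by omega
        have hlog3 : 3 ≤ Nat.log 2 n := by
          calc 3 = Nat.log 2 (2^3) := (Nat.log_pow (by norm_num : 1 < 2) 3).symm
            _ ≤ Nat.log 2 n := Nat.log_mono_right (by norm_num; omega)
        have h1 : f (e+3) (n-1) ≤ (e + (Nat.log 2 n - 2)).choose e * (n - (e+4)) := by
          have hih := ih (n-1) (by omega) (e+3) (by omega) (by omega)
          have e1 : e + 3 - 3 = e := by omega
          have e2 : n - 1 - (e+3) = n - (e+4) := by omega
          rw [e1, e2] at hih
          refine le_trans hih (Nat.mul_le_mul_right _ (Nat.choose_le_choose _ ?_))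
          have := Nat.log_mono_right (show n-1 ≤ n by omega) (b := 2)
          omega
        have h2 : f (e+4) (n/2) ≤ (e + (Nat.log 2 n - 2)).choose (e+1) * (n/2 - (e+4)) := by
          have hn2lt : n/2 < n := Nat.div_lt_self (by omega) (by norm_num)
          have hdn2 : e+4 ≤ n/2 := by
            rw [Nat.le_div_iff_mul_le (by norm_num)]; omega
          have hih := ih (n/2) hn2lt (e+4) (by omega) hdn2
          rw [hsub3] at hih
          have e3 : e + 1 + (Nat.log 2 (n/2) - 2) = e + (Nat.log 2 n - 2) := by
            rw [Nat.log_div_base]; omega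
          rwa [e3] at hih
        have pascal : (e + 1 + (Nat.log 2 n - 2)).choose (e+1)
            = (e + (Nat.log 2 n - 2)).choose e + (e + (Nat.log 2 n - 2)).choose (e+1) := by
          rw [show e + 1 + (Nat.log 2 n - 2) = (e + (Nat.log 2 n - 2)) + 1 by omega]
          exact Nat.choose_succ_succ _ e
        have hq2 : 2 * (n/2) ≤ n := by
          have := Nat.div_mul_le_self n 2; omega
        have hBpos : 1 ≤ (e + (Nat.log 2 n - 2)).choose (e+1) :=
          Nat.choose_pos (by omega)
        have hkk' := kk (e+4) n (by omega) hkk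
        rw [hsub3]
        rw [pascal]
        set A := (e + (Nat.log 2 n - 2)).choose e with hA
        set B := (e + (Nat.log 2 n - 2)).choose (e+1) with hB
        set q := n / 2 with hq
        have hdq : e + 4 ≤ q := by
          rw [hq, Nat.le_div_iff_mul_le (by norm_num)]; omega
        calc f (e+4) n ≤ f (e+3) (n-1) + 2 * f (e+4) q + 2 := hkk'
          _ ≤ A * (n-(e+4)) + 2 * (B * (q-(e+4))) + 2 :=
              Nat.add_le_add (Nat.add_le_add h1 (Nat.mul_le_mul_left _ h2)) le_rfl
          _ ≤ (A + B) * (n - (e+4)) := by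
              have h6 : 2 * (B * (q-(e+4))) = B * (2*(q-(e+4))) := by ring
              have h5 : 2*(q-(e+4)) + (e+4) ≤ n - (e+4) := by omega
              have h7 : B * (2*(q-(e+4)) + (e+4)) ≤ B * (n - (e+4)) :=
                Nat.mul_le_mul_left _ h5
              have h8 : 2 ≤ B * (e+4) := by
                calc 2 ≤ 1 * 4 := by norm_num
                _ ≤ B * (e+4) := Nat.mul_le_mul hBpos (by omega)
              have h9 : B * (2*(q-(e+4)) + (e+4)) = B * (2*(q-(e+4))) + B * (e+4) := by ring
              have h10 : (A + B) * (n - (e+4)) = A * (n-(e+4)) + B * (n-(e+4)) := by ring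
              omega
      · -- LOW case
        have hlow := low (e+4) n (by omega) hdn (by omega)

        have hih := ih (n-1) (by omega) (e+3) (by omega) (by omega)
        have e1 : e + 3 - 3 = e := by omega
        have e2 : n - 1 - (e+3) = n - (e+4) := by omega
        rw [e1, e2] at hih
        rw [hsub3]
        refine le_trans hlow (le_trans hih (Nat.mul_le_mul_right _ ?_))
        calc (e + (Nat.log 2 (n-1) - 2)).choose e
            ≤ (e + (Nat.log 2 n - 2)).choose e := by
              refine Nat.choose_le_choose _ ?_
              have := Nat.log_mono_right (show n-1 ≤ n by omega) (b := 2)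
              omega
          _ ≤ (e + 1 + (Nat.log 2 n - 2)).choose (e+1) := by
              rw [show e + 1 + (Nat.log 2 n - 2) = (e + (Nat.log 2 n - 2)) + 1 by omega,
                Nat.choose_succ_succ _ e]
              exact Nat.le_add_right _ _



private lemma pow_two_bound (a : ℕ) (ha : 1 ≤ a) (N lam : ℝ) (hN : 0 < N)
    (hlam : Real.logb 2 N = lam) (hge : (a:ℝ) + 2 ≤ lam) :
    4 * (2:ℝ)^a * Real.sqrt (3*lam - 5) ≤ N * Real.sqrt (3*(a:ℝ)+1) := by
  have two_pos : (0:ℝ) < 2 := by norm_num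
  set u : ℝ := lam - ((a:ℝ)+2) with hu
  have hu0 : 0 ≤ u := by rw [hu]; linarith
  have hNr : N = (2:ℝ) ^ lam := by
    rw [← hlam]; exact (Real.rpow_logb two_pos (by norm_num) hN).symm
  have hsplit : (2:ℝ) ^ lam = (2:ℝ)^((a:ℝ)+2) * (2:ℝ)^u := by
    rw [← Real.rpow_add two_pos]
    congr 1
    rw [hu]; ring
  have hbase : (2:ℝ)^((a:ℝ)+2) = 4 * (2:ℝ)^a := by
    rw [Real.rpow_add two_pos, Real.rpow_natCast]
    norm_num [mul_comm]
  -- key square inequality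
  have h2u : (1:ℝ) + u ≤ ((2:ℝ)^u)^2 := by
    have e1 : ((2:ℝ)^u)^2 = (2:ℝ)^(u+u) := by
      rw [Real.rpow_add two_pos]; ring
    have e2 : (2:ℝ)^(u+u) = Real.exp (Real.log 2 * (u+u)) := Real.rpow_def_of_pos two_pos _
    have hlog : (0.6931471803:ℝ) < Real.log 2 := Real.log_two_gt_d9
    have h3 : u ≤ Real.log 2 * (u+u) := by nlinarith
    have h4 : 1 + Real.log 2 * (u+u) ≤ Real.exp (Real.log 2 * (u+u)) := by
      have := Real.add_one_le_exp (Real.log 2 * (u+u)); linarith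
    rw [e1, e2]; linarith
  have hkey : 3*lam - 5 ≤ ((2:ℝ)^u)^2 * (3*(a:ℝ)+1) := by
    have ha1 : (4:ℝ) ≤ 3*(a:ℝ)+1 := by
      have : (1:ℝ) ≤ (a:ℝ) := by exact_mod_cast ha
      linarith
    have hlameq : 3*lam - 5 = 3*(a:ℝ)+1 + 3*u := by rw [hu]; ring
    nlinarith [mul_le_mul_of_nonneg_right h2u (show (0:ℝ) ≤ 3*(a:ℝ)+1 by linarith)]
  have hs : Real.sqrt (3*lam-5) ≤ (2:ℝ)^u * Real.sqrt (3*(a:ℝ)+1) := by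
    have h5 : Real.sqrt (((2:ℝ)^u)^2 * (3*(a:ℝ)+1))
        = (2:ℝ)^u * Real.sqrt (3*(a:ℝ)+1) := by
      rw [Real.sqrt_mul (sq_nonneg _), Real.sqrt_sq (Real.rpow_nonneg two_pos.le u)]
    calc Real.sqrt (3*lam-5) ≤ Real.sqrt (((2:ℝ)^u)^2 * (3*(a:ℝ)+1)) :=
          Real.sqrt_le_sqrt hkey
      _ = _ := h5
  calc 4 * (2:ℝ)^a * Real.sqrt (3*lam - 5)
      ≤ 4 * (2:ℝ)^a * ((2:ℝ)^u * Real.sqrt (3*(a:ℝ)+1)) := by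
        apply mul_le_mul_of_nonneg_left hs
        positivity
    _ = ((2:ℝ)^((a:ℝ)+2) * (2:ℝ)^u) * Real.sqrt (3*(a:ℝ)+1) := by rw [hbase]; ring
    _ = N * Real.sqrt (3*(a:ℝ)+1) := by rw [← hsplit, ← hNr]

/-- Tail-cubic bound for polyhedra: for `d ≥ 3` and `n ≥ 2^(d-1)`,
`f d n ≤ (1/16) n³ / √(3 log₂ n - 5)`. -/
theorem tail_cubic_bound
    (f : ℕ → ℕ → ℕ)
    (kk : ∀ d n, 3 ≤ d → 2 * d ≤ n →
      f d n ≤ f (d - 1) (n - 1) + 2 * f d (n / 2) + 2)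
    (low : ∀ d n, 3 ≤ d → d ≤ n → n < 2 * d → f d n ≤ f (d - 1) (n - 1))
    (remove : ∀ d n, 3 ≤ d → d ≤ n → f (d - 1) (n - 1) + 1 ≤ f (d - 1) n)
    (base3 : ∀ n, 3 ≤ n → f 3 n ≤ n - 3) :
    ∀ d n, 3 ≤ d → 2 ^ (d - 1) ≤ n →
      (f d n : ℝ) ≤
        (1 / 16) * (n : ℝ) ^ 3 / Real.sqrt (3 * Real.logb 2 (n : ℝ) - 5) := by
  intro d n hd hn
  have hd2 : d - 1 < 2^(d-1) := Nat.lt_two_pow_self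
  have hdn : d ≤ n := by omega
  have key := key_bound' f kk low base3 n d hd hdn
  have h4le : (4:ℕ) ≤ 2^(d-1) := by
    calc (4:ℕ) = 2^2 := by norm_num
      _ ≤ 2^(d-1) := Nat.pow_le_pow_right (by norm_num) (by omega)
  have hn4 : 4 ≤ n := le_trans h4le hn
  have htd : d - 1 ≤ Nat.log 2 n := by
    calc d - 1 = Nat.log 2 (2^(d-1)) := (Nat.log_pow (by norm_num : 1<2) _).symm
      _ ≤ Nat.log 2 n := Nat.log_mono_right hn
  set t := Nat.log 2 n with ht
  have hpow_le : (2:ℕ)^t ≤ n := Nat.pow_log_le_self 2 (by omega)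
  have hlt : n < 2^(t+1) := Nat.lt_pow_succ_log_self (by norm_num) n
  have hN0 : (0:ℝ) < (n:ℝ) := by exact_mod_cast (show 0 < n by omega)
  set lam := Real.logb 2 (n:ℝ) with hlam
  have hlam_ge : ((d:ℝ) - 1) ≤ lam := by
    have hle : ((2:ℝ))^((d-1) : ℕ) ≤ (n:ℝ) := by exact_mod_cast hn
    have h1 : Real.logb 2 ((2:ℝ)^((d-1):ℕ)) ≤ lam :=
      Real.logb_le_logb_of_le (by norm_num) (by positivity) hle
    rw [Real.logb_pow, Real.logb_self_eq_one (by norm_num)] at h1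
    have h2 : ((d-1:ℕ):ℝ) = (d:ℝ) - 1 := by
      push_cast [Nat.cast_sub (show 1 ≤ d by omega)]
      ring
    rw [mul_one, h2] at h1
    exact h1
  have hlam2 : (2:ℝ) ≤ lam := by
    have : (3:ℝ) ≤ (d:ℝ) := by exact_mod_cast hd
    linarith
  have hLpos : (0:ℝ) < 3*lam - 5 := by linarith
  have hS : 0 < Real.sqrt (3*lam-5) := Real.sqrt_pos.mpr hLpos
  rw [le_div_iff₀ hS]
  have hcast : ((f d n : ℕ):ℝ) ≤ (((d - 3 + (t - 2)).choose (d - 3) * (n - d) : ℕ) : ℝ) := by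
    exact_mod_cast key
  suffices hT : 16 * (((d - 3 + (t - 2)).choose (d - 3) * (n - d) : ℕ) : ℝ)
      * Real.sqrt (3*lam-5) ≤ (n:ℝ)^3 by
    have h1 := mul_le_mul_of_nonneg_right hcast hS.le
    linarith
  by_cases hd3 : d = 3
  · subst hd3
    have e0 : ((3 - 3 + (t - 2)).choose (3-3) * (n - 3) : ℕ) = n - 3 := by simp
    rw [e0]
    have hx : ((n - 3 : ℕ):ℝ) = (n:ℝ) - 3 := by
      push_cast [Nat.cast_sub (show 3 ≤ n by omega)]
      ring
    rw [hx]
    have hN4 : (4:ℝ) ≤ (n:ℝ) := by exact_mod_cast hn4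
    have hlamN : lam ≤ (n:ℝ) := by
      have h1 : lam ≤ ((t:ℝ)+1) := by
        have hle : (n:ℝ) ≤ ((2:ℝ))^((t+1) : ℕ) := by exact_mod_cast hlt.le
        have h2 : lam ≤ Real.logb 2 ((2:ℝ)^((t+1):ℕ)) :=
          Real.logb_le_logb_of_le (by norm_num) hN0 hle
        rw [Real.logb_pow, Real.logb_self_eq_one (by norm_num)] at h2
        push_cast at h2
        linarith
      have h2 : (t:ℝ)+1 ≤ (n:ℝ) := by
        have h3 : t + 1 ≤ n := by
          have := Nat.lt_two_pow_self (n := t)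
          omega
        exact_mod_cast h3
      linarith
    have hs1 : Real.sqrt (3*lam-5) ≤ Real.sqrt (3*(n:ℝ)-5) :=
      Real.sqrt_le_sqrt (by linarith)
    have hpoly : 256*((n:ℝ)-3)^2*(3*(n:ℝ)-5) ≤ (n:ℝ)^6 := by
      nlinarith [sq_nonneg ((n:ℝ)-4), sq_nonneg ((n:ℝ)-5), sq_nonneg ((n:ℝ)^2-16),
        sq_nonneg ((n:ℝ)^3-27),
        mul_nonneg (sub_nonneg.mpr hN4) (sq_nonneg ((n:ℝ)-4)),
        sq_nonneg ((n:ℝ)^2 - 4*(n:ℝ)),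
        mul_nonneg (sub_nonneg.mpr hN4) (sq_nonneg ((n:ℝ)^2-16))]
    have hsq := Real.sq_sqrt (show (0:ℝ) ≤ 3*(n:ℝ)-5 by linarith)
    calc 16 * ((n:ℝ)-3) * Real.sqrt (3*lam-5)
        ≤ 16*((n:ℝ)-3)*Real.sqrt (3*(n:ℝ)-5) := by
          apply mul_le_mul_of_nonneg_left hs1 (by linarith)
      _ ≤ (n:ℝ)^3 := by
          nlinarith [Real.sqrt_nonneg (3*(n:ℝ)-5), hsq,
            sq_nonneg ((n:ℝ)^3 - 16*((n:ℝ)-3)*Real.sqrt (3*(n:ℝ)-5)),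
            pow_pos hN0 3,
            mul_nonneg (mul_nonneg (show (0:ℝ) ≤ 16*((n:ℝ)-3) by linarith)
              (Real.sqrt_nonneg (3*(n:ℝ)-5))) (pow_pos hN0 3).le]
  · have hd4 : 4 ≤ d := by omega
    set a := d - 3 with ha
    set σ := t - 2 with hσ
    have haσ : a ≤ σ := by omega
    have ha1 : 1 ≤ a := by omega
    have hcs := choose_sq a σ haσ
    set K := (a + σ).choose a with hK
    have hKr : (K:ℝ) * Real.sqrt (3*(a:ℝ)+1) ≤ (2:ℝ)^(a+σ) := by
      have h1 : ((K:ℝ))^2 * (3*(a:ℝ)+1) ≤ ((2:ℝ)^(a+σ))^2 := by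
        have h2 : ((2:ℝ)^(a+σ))^2 = ((4:ℝ))^(a+σ) := by
          rw [← pow_mul, mul_comm (a+σ) 2, pow_mul]; norm_num
        rw [h2]
        exact_mod_cast hcs
      have h2 : (K:ℝ)*Real.sqrt (3*(a:ℝ)+1) = Real.sqrt ((K:ℝ)^2 * (3*(a:ℝ)+1)) := by
        rw [Real.sqrt_mul (by positivity), Real.sqrt_sq (by positivity)]
      rw [h2]
      calc Real.sqrt ((K:ℝ)^2*(3*(a:ℝ)+1)) ≤ Real.sqrt (((2:ℝ)^(a+σ))^2) :=
            Real.sqrt_le_sqrt h1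
        _ = (2:ℝ)^(a+σ) := Real.sqrt_sq (by positivity)
    have hPow : (2:ℝ)^(a+σ) * 4 = (2:ℝ)^a * (2:ℝ)^t := by
      have e : a + σ + 2 = a + t := by omega
      calc (2:ℝ)^(a+σ)*4 = (2:ℝ)^(a+σ+2) := by rw [pow_add (2:ℝ) (a+σ) 2]; norm_num
        _ = (2:ℝ)^(a+t) := by rw [e]
        _ = (2:ℝ)^a*(2:ℝ)^t := pow_add 2 a t
    have h2tN : ((2:ℝ))^t ≤ (n:ℝ) := by exact_mod_cast hpow_le
    have hxN : ((n - d : ℕ):ℝ) ≤ (n:ℝ) := by exact_mod_cast Nat.sub_le n d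
    have hmain : 4 * (2:ℝ)^a * Real.sqrt (3*lam - 5) ≤ (n:ℝ) * Real.sqrt (3*(a:ℝ)+1) := by
      apply pow_two_bound a ha1 _ _ hN0 hlam.symm
      have hacast : (a:ℝ) = (d:ℝ) - 3 := by
        rw [ha]
        push_cast [Nat.cast_sub hd]
        ring
      rw [hacast]
      linarith
    have hsq3 : (0:ℝ) < Real.sqrt (3*(a:ℝ)+1) := Real.sqrt_pos.mpr (by positivity)
    rw [Nat.cast_mul]
    set X := ((n - d : ℕ):ℝ) with hX
    set S := Real.sqrt (3*lam-5) with hSS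
    have hX0 : (0:ℝ) ≤ X := by rw [hX]; positivity
    have final : (16 * ((K:ℝ)*X) * S) * Real.sqrt (3*(a:ℝ)+1)
        ≤ ((n:ℝ)^3) * Real.sqrt (3*(a:ℝ)+1) := by
      calc (16*((K:ℝ)*X)*S)*Real.sqrt (3*(a:ℝ)+1)
          = (16*X*S)*((K:ℝ)*Real.sqrt (3*(a:ℝ)+1)) := by ring
        _ ≤ (16*X*S)*((2:ℝ)^(a+σ)) := by
            apply mul_le_mul_of_nonneg_left hKr
            have : (0:ℝ) ≤ S := Real.sqrt_nonneg _
            positivity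
        _ = 4*X*S*((2:ℝ)^(a+σ)*4) := by ring
        _ = (X*(2:ℝ)^t)*(4*(2:ℝ)^a*S) := by rw [hPow]; ring
        _ ≤ ((n:ℝ)*(n:ℝ))*((n:ℝ)*Real.sqrt (3*(a:ℝ)+1)) := by
            have hSnn : (0:ℝ) ≤ S := Real.sqrt_nonneg _
            apply mul_le_mul (mul_le_mul hxN h2tN (by positivity) hN0.le) hmain
              (by positivity) (by positivity)
        _ = (n:ℝ)^3*Real.sqrt (3*(a:ℝ)+1) := by ring
    exact le_of_mul_le_mul_right final hsq3
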